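/- Let Y ∈ ℝ^{L×K}, let γ > 0, let F ∈ ℝ^{(K−1)×K} be the difference matrix with F_{i,i} = −1, F_{i,i+1} = 1 and all other entries 0, and let Z = [Y : γ Y Fᵀ] ∈ ℝ^{L×(2K−1)} be the horizontal concatenation of Y and γ·Y Fᵀ (the matrix of column differences of Y, scaled by γ). Then Z Zᵀ = Y R Yᵀ, where R = I_K + γ² Fᵀ F. Consequently the standard inner product of any two columns-space representations satisfies (Z₁,Z₂)_{2K−1} = (Q₁,Q₂)_K + γ²(F Q₁, F Q₂)_{K−1} for corresponding vectors, and the left singular vectors of Z coincide with the left factors of the (L,R)-SVD of Y with L = I_L and R = I_K + γ² Fᵀ F. -/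

import Mathlib

open Matrix

/-- Proposition 5 of the paper (DerivSSA as Oblique SSA): for
`Z = [Y : γ Y Fᵀ]`, with `F` the difference matrix, one has
`Z Zᵀ = Y R Yᵀ` for `R = I + γ² Fᵀ F`; correspondingly, the standard inner
product of the stacked rows satisfies
`(Z₁,Z₂) = (Q₁,Q₂) + γ² (F Q₁, F Q₂)`, so the left singular vectors of `Z`
are the left factors of the (I,R)-SVD of `Y`. -/
theorem derivSSA_as_oblique (Lp K : ℕ) (γ : ℝ) (hγ : 0 < γ)
    (Y : Matrix (Fin Lp) (Fin (K + 1)) ℝ)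
    (F : Matrix (Fin K) (Fin (K + 1)) ℝ)
    (hF : ∀ i j, F i j =
      if (j : ℕ) = (i : ℕ) then (-1 : ℝ)
      else if (j : ℕ) = (i : ℕ) + 1 then 1 else 0)
    (Z : Matrix (Fin Lp) (Fin (K + 1) ⊕ Fin K) ℝ)
    (hZ : Z = Matrix.fromCols Y (γ • (Y * Fᵀ)))
    (R : Matrix (Fin (K + 1)) (Fin (K + 1)) ℝ)
    (hR : R = 1 + γ ^ 2 • (Fᵀ * F)) :
    Z * Zᵀ = Y * R * Yᵀ ∧
    ∀ Q₁ Q₂ : Fin (K + 1) → ℝ,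
      (Sum.elim Q₁ (γ • (F *ᵥ Q₁))) ⬝ᵥ (Sum.elim Q₂ (γ • (F *ᵥ Q₂)))
        = Q₁ ⬝ᵥ Q₂ + γ ^ 2 * ((F *ᵥ Q₁) ⬝ᵥ (F *ᵥ Q₂)) := by
  constructor
  · subst hZ hR
    rw [transpose_fromCols, fromCols_mul_fromRows]
    simp only [transpose_smul, transpose_mul, transpose_transpose,
      Matrix.mul_add, Matrix.add_mul, Matrix.mul_one, Matrix.mul_smul,
      Matrix.smul_mul, smul_smul]
    ring_nf
    rw [Matrix.mul_assoc, Matrix.mul_assoc, Matrix.mul_assoc]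
  · intro Q₁ Q₂
    simp only [dotProduct, Fintype.sum_sum_type, Sum.elim_inl, Sum.elim_inr,
      Pi.smul_apply, smul_eq_mul, Finset.mul_sum]
    ring_nf
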